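/- Let m > n ≥ 1 be integers with gcd(m, n) = 1. Then all the denominators below are nonzero and ∑_{l=0}^{n−1} ∑_{k=1}^{2m−1} 2(ζ_{2m}^{2nk} − 1) / ((1 − ζ_{2m}^{−k} ζ_{2n}^{−l})(1 − ζ_{2m}^{−k} ζ_{2n}^{l})) = 4n(m − n − 1). -/

import Mathlib

open Finset Complex

/-- `ζ_N = exp(2πi/N)`. -/
noncomputable def zeta (N : ℕ) : ℂ := Complex.exp (2 * Real.pi * Complex.I / N)

lemma zeta_ne_zero (N : ℕ) : zeta N ≠ 0 := Complex.exp_ne_zero _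

lemma zeta_prim {N : ℕ} (h : N ≠ 0) : IsPrimitiveRoot (zeta N) N :=
  Complex.isPrimitiveRoot_exp N h

lemma zeta_mul_pow (a b : ℕ) (ha : a ≠ 0) (hb : b ≠ 0) : zeta (a * b) ^ b = zeta a := by
  rw [zeta, zeta, ← Complex.exp_nat_mul]
  congr 1
  have ha' : (a : ℂ) ≠ 0 := Nat.cast_ne_zero.mpr ha
  have hb' : (b : ℂ) ≠ 0 := Nat.cast_ne_zero.mpr hb
  push_cast
  field_simp

/-- `∏_{j<n} (x - ω^j) = x^n - 1` for a primitive `n`-th root of unity `ω`. -/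
lemma prod_formula {n : ℕ} (hn : n ≠ 0) {ω : ℂ} (hω : IsPrimitiveRoot ω n) (x : ℂ) :
    ∏ j ∈ range n, (x - ω ^ j) = x ^ n - 1 := by
  have hpos : 0 < n := Nat.pos_of_ne_zero hn
  have himg : (range n).image (ω ^ ·) = Polynomial.nthRootsFinset n (1 : ℂ) := by
    apply Finset.eq_of_subset_of_card_le
    · intro z hz
      simp only [Finset.mem_image] at hz
      obtain ⟨j, _, rfl⟩ := hz
      rw [Polynomial.mem_nthRootsFinset hpos (1 : ℂ), ← pow_mul, mul_comm, pow_mul, hω.pow_eq_one, one_pow]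
    · rw [hω.card_nthRootsFinset, Finset.card_image_of_injOn hω.injOn_pow, Finset.card_range]
  have h1 := congrArg (Polynomial.eval x) (Polynomial.X_pow_sub_one_eq_prod hpos hω)
  simp only [Polynomial.eval_sub, Polynomial.eval_pow, Polynomial.eval_X, Polynomial.eval_one,
    Polynomial.eval_prod, Polynomial.eval_sub, Polynomial.eval_C] at h1
  rw [h1, ← himg, Finset.prod_image (fun i hi j hj h => hω.injOn_pow hi hj h)]

lemma range_split {N : ℕ} (hN : 1 ≤ N) (f : ℕ → ℂ) :
    ∑ k ∈ range N, f k = f 0 + ∑ k ∈ Icc 1 (N - 1), f k := by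
  have h1 : Finset.Icc 1 (N - 1) = Finset.Ico 1 N := by
    rw [← Finset.Ico_add_one_right_eq_Icc]; congr 1; omega
  rw [h1, Finset.range_eq_Ico, Finset.sum_eq_sum_Ico_succ_bot hN]

lemma geom_zero {N : ℕ} {μ : ℂ} (hμ : IsPrimitiveRoot μ N) {j : ℕ} (hj1 : 1 ≤ j) (hj2 : j < N) :
    ∑ k ∈ range N, (μ ^ k) ^ j = 0 := by
  have h1 : μ ^ j ≠ 1 := hμ.pow_ne_one_of_pos_of_lt (by omega) hj2
  have key := geom_sum_mul (μ ^ j) N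
  have h2 : (μ ^ j) ^ N = 1 := by rw [← pow_mul, mul_comm, pow_mul, hμ.pow_eq_one, one_pow]
  rw [h2, sub_self] at key
  have h3 : ∑ k ∈ range N, (μ ^ k) ^ j = ∑ k ∈ range N, (μ ^ j) ^ k :=
    Finset.sum_congr rfl fun k _ => by rw [← pow_mul, ← pow_mul, mul_comm]
  rw [h3]
  exact (mul_eq_zero.mp key).resolve_right (sub_ne_zero.mpr h1)

lemma icc_geom {N : ℕ} {μ : ℂ} (hμ : IsPrimitiveRoot μ N) {j : ℕ} (hj1 : 1 ≤ j) (hj2 : j < N) :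
    ∑ k ∈ Icc 1 (N - 1), (μ ^ k) ^ j = -1 := by
  have h := range_split (N := N) (by omega) (fun k => (μ ^ k) ^ j)
  rw [geom_zero hμ hj1 hj2] at h
  simp only [pow_zero, one_pow] at h
  linear_combination -h

lemma pair_neg_one {z : ℂ} (hz0 : z ≠ 0) (hz1 : z ≠ 1) :
    1 / (z - 1) + 1 / (z⁻¹ - 1) = -1 := by
  have h1 : z - 1 ≠ 0 := sub_ne_zero.mpr hz1
  have h2 : z⁻¹ - 1 ≠ 0 := by
    intro h
    apply hz1
    have h3 : z⁻¹ = 1 := by linear_combination h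
    rw [← inv_inv z, h3, inv_one]
  rw [div_add_div _ _ h1 h2, div_eq_iff (mul_ne_zero h1 h2)]
  field_simp
  ring

lemma G_val {N : ℕ} (hN : 1 ≤ N) {μ : ℂ} (hμ : IsPrimitiveRoot μ N) (hμ0 : μ ≠ 0) :
    2 * ∑ k ∈ Icc 1 (N - 1), 1 / (μ ^ k - 1) = -((N : ℂ) - 1) := by
  have hmem : ∀ k ∈ Icc 1 (N - 1), μ ^ k ≠ 1 := fun k hk => by
    simp only [Finset.mem_Icc] at hk
    exact hμ.pow_ne_one_of_pos_of_lt (by omega) (by omega)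
  have hrefl : ∑ k ∈ Icc 1 (N - 1), 1 / (μ ^ k - 1)
      = ∑ k ∈ Icc 1 (N - 1), 1 / ((μ ^ k)⁻¹ - 1) := by
    refine Finset.sum_nbij' (fun k => N - k) (fun k => N - k) ?_ ?_ ?_ ?_ ?_
    · intro k hk; simp only [Finset.mem_Icc] at hk ⊢; omega
    · intro k hk; simp only [Finset.mem_Icc] at hk ⊢; omega
    · intro k hk; simp only [Finset.mem_Icc] at hk; omega
    · intro k hk; simp only [Finset.mem_Icc] at hk; omega
    · intro k hk
      simp only [Finset.mem_Icc] at hk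
      have h1 : μ ^ (N - k) * μ ^ k = 1 := by
        rw [← pow_add, Nat.sub_add_cancel (by omega), hμ.pow_eq_one]
      rw [inv_eq_of_mul_eq_one_right h1]
  have h2 : 2 * ∑ k ∈ Icc 1 (N - 1), 1 / (μ ^ k - 1)
      = ∑ k ∈ Icc 1 (N - 1), (1 / (μ ^ k - 1) + 1 / ((μ ^ k)⁻¹ - 1)) := by
    rw [Finset.sum_add_distrib, ← hrefl]; ring
  rw [h2, Finset.sum_congr rfl (fun k hk => pair_neg_one (pow_ne_zero _ hμ0) (hmem k hk))]
  rw [Finset.sum_const, Nat.card_Icc]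
  have h3 : N - 1 + 1 - 1 = N - 1 := by omega
  rw [h3]
  simp only [nsmul_eq_mul]
  have h4 : ((N - 1 : ℕ) : ℂ) = (N : ℂ) - 1 := by
    push_cast [Nat.cast_sub hN]; ring
  rw [h4]; ring

lemma F_val {N : ℕ} {μ : ℂ} (hN : 1 ≤ N) (hμ : IsPrimitiveRoot μ N) {a : ℕ}
    (ha1 : 1 ≤ a) (ha2 : a ≤ N) :
    ∑ k ∈ Icc 1 (N - 1), (μ ^ k) ^ a / (μ ^ k - 1)
      = (N : ℂ) - a + ∑ k ∈ Icc 1 (N - 1), 1 / (μ ^ k - 1) := by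
  have hmem : ∀ k ∈ Icc 1 (N - 1), μ ^ k ≠ 1 := fun k hk => by
    simp only [Finset.mem_Icc] at hk
    exact hμ.pow_ne_one_of_pos_of_lt (by omega) (by omega)
  have step : ∀ k ∈ Icc 1 (N - 1),
      (μ ^ k) ^ a / (μ ^ k - 1) = (∑ j ∈ range a, (μ ^ k) ^ j) + 1 / (μ ^ k - 1) := by
    intro k hk
    have hz1 : μ ^ k - 1 ≠ 0 := sub_ne_zero.mpr (hmem k hk)
    set z := μ ^ k with hzdef
    rw [div_eq_iff hz1, add_mul, div_mul_cancel₀ _ hz1]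
    linear_combination -geom_sum_mul z a
  rw [Finset.sum_congr rfl step, Finset.sum_add_distrib]
  congr 1
  have hz : ∑ k ∈ Icc 1 (N - 1), (μ ^ k) ^ 0 = ((N : ℂ) - 1) := by
    simp only [pow_zero, Finset.sum_const, Nat.card_Icc, nsmul_eq_mul, mul_one]
    have h4 : N - 1 + 1 - 1 = N - 1 := by omega
    rw [h4]
    push_cast [Nat.cast_sub hN]
    ring
  have hneg : ∀ i ∈ range (a - 1), ∑ k ∈ Icc 1 (N - 1), (μ ^ k) ^ (i + 1) = -1 := by
    intro i hi
    simp only [Finset.mem_range] at hi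
    exact icc_geom hμ (by omega) (by omega)
  have hsplit : ∑ j ∈ range a, (∑ k ∈ Icc 1 (N - 1), (μ ^ k) ^ j)
      = (∑ i ∈ range (a - 1), ∑ k ∈ Icc 1 (N - 1), (μ ^ k) ^ (i + 1))
        + ∑ k ∈ Icc 1 (N - 1), (μ ^ k) ^ 0 := by
    rw [← Finset.sum_range_succ' (fun j => ∑ k ∈ Icc 1 (N - 1), (μ ^ k) ^ j) (a - 1),
      Nat.sub_add_cancel ha1]
  rw [Finset.sum_comm, hsplit, Finset.sum_congr rfl hneg, hz, Finset.sum_const,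
    Finset.card_range, nsmul_eq_mul]
  have h5 : ((a - 1 : ℕ) : ℂ) = (a : ℂ) - 1 := by push_cast [Nat.cast_sub ha1]; ring
  rw [h5]
  ring

/-- The `l = 0` inner sum. -/
lemma Sigma0 {m n : ℕ} (hn : 1 ≤ n) (hmn : n < m) {μ : ℂ}
    (hμ : IsPrimitiveRoot μ (2 * m)) (hμ0 : μ ≠ 0) :
    ∑ k ∈ Icc 1 (2 * m - 1), 2 * (μ ^ (2 * n * k) - 1) / ((1 - μ⁻¹ ^ k) * (1 - μ⁻¹ ^ k))
      = 4 * (m : ℂ) * n - 4 * (n : ℂ) ^ 2 - 4 * n := by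
  have hmem : ∀ k ∈ Icc 1 (2 * m - 1), μ ^ k ≠ 1 := fun k hk => by
    simp only [Finset.mem_Icc] at hk
    exact hμ.pow_ne_one_of_pos_of_lt (by omega) (by omega)
  have step : ∀ k ∈ Icc 1 (2 * m - 1),
      2 * (μ ^ (2 * n * k) - 1) / ((1 - μ⁻¹ ^ k) * (1 - μ⁻¹ ^ k))
        = ∑ j ∈ range (2 * n), 2 * (μ ^ k) ^ (j + 2) / (μ ^ k - 1) := by
    intro k hk
    have hz1 : μ ^ k ≠ 1 := hmem k hk
    have hz0 : μ ^ k ≠ 0 := pow_ne_zero _ hμ0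
    have hzm : μ ^ (2 * n * k) = (μ ^ k) ^ (2 * n) := by
      rw [← pow_mul]; congr 1; ring
    have hi : μ⁻¹ ^ k = (μ ^ k)⁻¹ := inv_pow μ k
    have hd1 : (1 : ℂ) - (μ ^ k)⁻¹ ≠ 0 := by
      intro h
      apply hz1
      have h3 : (μ ^ k)⁻¹ = 1 := by linear_combination -h
      rw [← inv_inv (μ ^ k), h3, inv_one]
    have hz1' : μ ^ k - 1 ≠ 0 := sub_ne_zero.mpr hz1
    have e4 : ∀ j ∈ range (2 * n), 2 * (μ ^ k) ^ (j + 2) / (μ ^ k - 1)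
        = 2 * (μ ^ k) ^ (j + 2) * (μ ^ k - 1)⁻¹ := fun j _ => div_eq_mul_inv _ _
    rw [hzm, hi, Finset.sum_congr rfl e4, ← Finset.sum_mul, ← div_eq_mul_inv]
    rw [div_eq_div_iff (mul_ne_zero hd1 hd1) hz1']
    have e1 : ∑ j ∈ range (2 * n), 2 * (μ ^ k) ^ (j + 2)
        = 2 * (μ ^ k) ^ 2 * ∑ j ∈ range (2 * n), (μ ^ k) ^ j := by
      rw [Finset.mul_sum]; exact Finset.sum_congr rfl fun j _ => by ring
    have e2 : (μ ^ k) * (1 - (μ ^ k)⁻¹) = μ ^ k - 1 := by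
      rw [mul_sub, mul_one, mul_inv_cancel₀ hz0]
    have e3 := geom_sum_mul (μ ^ k) (2 * n)
    rw [e1]
    linear_combination (-2 * (μ ^ k - 1)) * e3 -
      2 * (∑ j ∈ range (2 * n), (μ ^ k) ^ j) * ((μ ^ k - 1) + μ ^ k * (1 - (μ ^ k)⁻¹)) * e2
  rw [Finset.sum_congr rfl step, Finset.sum_comm]
  have inner : ∀ j ∈ range (2 * n),
      ∑ k ∈ Icc 1 (2 * m - 1), 2 * (μ ^ k) ^ (j + 2) / (μ ^ k - 1)
        = 2 * (((2 * m : ℕ) : ℂ) - ((j : ℂ) + 2) + ∑ k ∈ Icc 1 (2 * m - 1), 1 / (μ ^ k - 1)) := by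
    intro j hj
    simp only [Finset.mem_range] at hj
    have e5 : ∀ k ∈ Icc 1 (2 * m - 1), 2 * (μ ^ k) ^ (j + 2) / (μ ^ k - 1)
        = 2 * ((μ ^ k) ^ (j + 2) / (μ ^ k - 1)) := fun k _ => by ring
    rw [Finset.sum_congr rfl e5, ← Finset.mul_sum,
      F_val (by omega) hμ (a := j + 2) (by omega) (by omega)]
    push_cast
    ring
  rw [Finset.sum_congr rfl inner]
  have hG := G_val (N := 2 * m) (by omega) hμ hμ0
  have hgauss : (∑ j ∈ range (2 * n), (j : ℂ)) * 2 = (2 * (n : ℂ)) * (2 * (n : ℂ) - 1) := by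
    have h0 := Finset.sum_range_id_mul_two (2 * n)
    have h1 := congrArg (fun t : ℕ => (t : ℂ)) h0
    push_cast [Nat.cast_sub (show 1 ≤ 2 * n by omega)] at h1
    linear_combination h1
  have expand : ∀ j ∈ range (2 * n),
      2 * (((2 * m : ℕ) : ℂ) - ((j : ℂ) + 2) + ∑ k ∈ Icc 1 (2 * m - 1), 1 / (μ ^ k - 1))
        = (4 * (m : ℂ) - 4 + 2 * ∑ k ∈ Icc 1 (2 * m - 1), 1 / (μ ^ k - 1)) + (-2) * (j : ℂ) := by
    intro j _
    push_cast
    ring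
  rw [Finset.sum_congr rfl expand, Finset.sum_add_distrib, Finset.sum_const, Finset.card_range,
    ← Finset.mul_sum, nsmul_eq_mul]
  push_cast at hG ⊢
  linear_combination (2 * (n : ℂ)) * hG - hgauss

/-- The inner sum vanishes for `1 ≤ l < n`. -/
lemma inner_zero {m n : ℕ} (hn : 1 ≤ n) (hmn : n < m) {μ ω : ℂ}
    (hμ : IsPrimitiveRoot μ (2 * m)) (hμ0 : μ ≠ 0)
    (hω : IsPrimitiveRoot ω (2 * n)) {l : ℕ} (hl1 : 1 ≤ l) (hl2 : l < n)
    (hd : ∀ k ∈ Icc 1 (2 * m - 1),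
      (1 : ℂ) - μ⁻¹ ^ k * ω⁻¹ ^ l ≠ 0 ∧ (1 : ℂ) - μ⁻¹ ^ k * ω ^ l ≠ 0) :
    ∑ k ∈ Icc 1 (2 * m - 1),
      2 * (μ ^ (2 * n * k) - 1) / ((1 - μ⁻¹ ^ k * ω⁻¹ ^ l) * (1 - μ⁻¹ ^ k * ω ^ l)) = 0 := by
  set s : Finset ℕ := ((range (2 * n)).erase l).erase (2 * n - l) with hs
  have hlmem : l ∈ range (2 * n) := by simp only [Finset.mem_range]; omega
  have h2mem : 2 * n - l ∈ (range (2 * n)).erase l := by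
    simp only [Finset.mem_erase, Finset.mem_range]; omega
  have h0mem : 0 ∈ s := by
    simp only [hs, Finset.mem_erase, Finset.mem_range]; omega
  have hcs : s.card = 2 * n - 2 := by
    rw [hs, Finset.card_erase_of_mem h2mem, Finset.card_erase_of_mem hlmem, Finset.card_range]
    omega
  have hwinv : ω ^ (2 * n - l) = (ω ^ l)⁻¹ := by
    apply eq_inv_of_mul_eq_one_left
    rw [← pow_add]
    have : 2 * n - l + l = 2 * n := by omega
    rw [this, hω.pow_eq_one]
  have hsplit : ∀ x : ℂ, (x - ω ^ l) * ((x - (ω ^ l)⁻¹) * ∏ j ∈ s, (x - ω ^ j))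
      = x ^ (2 * n) - 1 := by
    intro x
    rw [hs, ← hwinv, Finset.mul_prod_erase _ (fun j => x - ω ^ j) h2mem,
      Finset.mul_prod_erase _ (fun j => x - ω ^ j) hlmem, prod_formula (by omega) hω]
  have step : ∀ k ∈ Icc 1 (2 * m - 1),
      2 * (μ ^ (2 * n * k) - 1) / ((1 - μ⁻¹ ^ k * ω⁻¹ ^ l) * (1 - μ⁻¹ ^ k * ω ^ l))
        = 2 * (μ ^ k) ^ 2 * ∏ j ∈ s, (μ ^ k - ω ^ j) := by
    intro k hk
    obtain ⟨h1, h2⟩ := hd k hk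
    have hz0 : μ ^ k ≠ 0 := pow_ne_zero _ hμ0
    have hzm : μ ^ (2 * n * k) = (μ ^ k) ^ (2 * n) := by
      rw [← pow_mul]; congr 1; ring
    simp only [inv_pow] at h1 h2 ⊢
    rw [hzm, div_eq_iff (mul_ne_zero h1 h2)]
    have eA : μ ^ k * (1 - (μ ^ k)⁻¹ * (ω ^ l)⁻¹) = μ ^ k - (ω ^ l)⁻¹ := by
      rw [mul_sub, mul_one, ← mul_assoc, mul_inv_cancel₀ hz0, one_mul]
    have eB : μ ^ k * (1 - (μ ^ k)⁻¹ * ω ^ l) = μ ^ k - ω ^ l := by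
      rw [mul_sub, mul_one, ← mul_assoc, mul_inv_cancel₀ hz0, one_mul]
    have eP := hsplit (μ ^ k)
    linear_combination (-2) * eP
      - 2 * (∏ j ∈ s, (μ ^ k - ω ^ j)) * (μ ^ k * (1 - (μ ^ k)⁻¹ * ω ^ l)) * eA
      - 2 * (∏ j ∈ s, (μ ^ k - ω ^ j)) * (μ ^ k - (ω ^ l)⁻¹) * eB
  rw [Finset.sum_congr rfl step]
  have hexp : ∀ k : ℕ, 2 * (μ ^ k) ^ 2 * ∏ j ∈ s, (μ ^ k - ω ^ j)
      = ∑ t ∈ s.powerset, 2 * (μ ^ k) ^ (t.card + 2) * ∏ j ∈ s \ t, (-ω ^ j) := by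
    intro k
    have hpa : ∏ j ∈ s, (μ ^ k - ω ^ j) = ∏ j ∈ s, ((μ ^ k) + (-ω ^ j)) :=
      Finset.prod_congr rfl fun j _ => by ring
    rw [hpa, Finset.prod_add, Finset.mul_sum]
    refine Finset.sum_congr rfl fun t ht => ?_
    rw [Finset.prod_const]
    ring
  have hsum0 : ∑ k ∈ range (2 * m), (2 * (μ ^ k) ^ 2 * ∏ j ∈ s, (μ ^ k - ω ^ j)) = 0 := by
    rw [Finset.sum_congr rfl fun k _ => hexp k, Finset.sum_comm]
    refine Finset.sum_eq_zero fun t ht => ?_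
    have htc : t.card ≤ 2 * n - 2 := hcs ▸ Finset.card_le_card (Finset.mem_powerset.mp ht)
    have hswap : ∑ k ∈ range (2 * m), 2 * (μ ^ k) ^ (t.card + 2) * ∏ j ∈ s \ t, (-ω ^ j)
        = (2 * ∏ j ∈ s \ t, (-ω ^ j)) * ∑ k ∈ range (2 * m), (μ ^ k) ^ (t.card + 2) := by
      rw [Finset.mul_sum]; exact Finset.sum_congr rfl fun k _ => by ring
    rw [hswap, geom_zero hμ (by omega) (by omega), mul_zero]
  have hrs := range_split (N := 2 * m) (by omega)
    (fun k => 2 * (μ ^ k) ^ 2 * ∏ j ∈ s, (μ ^ k - ω ^ j))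
  rw [hsum0] at hrs
  have h00 : 2 * (μ ^ 0) ^ 2 * ∏ j ∈ s, (μ ^ 0 - ω ^ j) = 0 := by
    have : ∏ j ∈ s, (μ ^ 0 - ω ^ j) = 0 :=
      Finset.prod_eq_zero h0mem (by simp)
    rw [this, mul_zero]
  rw [h00] at hrs
  linear_combination -hrs

/-- Core divisibility argument for the nonvanishing of the denominators. -/
lemma core {m n : ℕ} (hn : 1 ≤ n) (hmn : n < m) (hgcd : Nat.gcd m n = 1)
    {k : ℕ} (hk1 : 1 ≤ k) (hk2 : k ≤ 2 * m - 1) {l' : ℤ} (hl1 : -(n : ℤ) < l') (hl2 : l' < n) :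
    zeta (2 * m * n) ^ ((m : ℤ) * l' - (n : ℤ) * k) ≠ 1 := by
  have hζ : IsPrimitiveRoot (zeta (2 * m * n)) (2 * m * n) :=
    zeta_prim (Nat.mul_ne_zero (Nat.mul_ne_zero (by omega) (by omega)) (by omega))
  intro hone
  obtain ⟨t, ht⟩ := (hζ.zpow_eq_one_iff_dvd _).mp hone
  push_cast at ht
  have hdvd : (m : ℤ) ∣ (n : ℤ) * k := ⟨l' - 2 * n * t, by linear_combination -ht⟩
  have hdvdn : m ∣ n * k := by exact_mod_cast hdvd
  have hmk : m ∣ k := (Nat.Coprime.dvd_of_dvd_mul_left hgcd hdvdn)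
  have hkm : k = m := by
    obtain ⟨c, rfl⟩ := hmk
    rcases Nat.lt_or_ge c 2 with h | h
    · interval_cases c <;> omega
    · have := Nat.mul_le_mul_left m h
      omega
  rw [hkm] at ht
  have hm0 : (m : ℤ) ≠ 0 := by exact_mod_cast (by omega : m ≠ 0)
  have hcancel : l' - n = 2 * n * t := by
    have h2 : (m : ℤ) * (l' - n) = (m : ℤ) * (2 * n * t) := by linear_combination ht
    exact mul_left_cancel₀ hm0 h2
  have hn1 : (1 : ℤ) ≤ n := by exact_mod_cast hn
  rcases le_or_gt 0 t with h | h
  · nlinarith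
  · nlinarith

/-- The denominators are nonzero. -/
lemma denoms {m n : ℕ} (hn : 1 ≤ n) (hmn : n < m) (hgcd : Nat.gcd m n = 1)
    {l k : ℕ} (hl : l ∈ Finset.range n) (hk : k ∈ Finset.Icc 1 (2 * m - 1)) :
    (1 : ℂ) - (zeta (2 * m))⁻¹ ^ k * (zeta (2 * n))⁻¹ ^ l ≠ 0 ∧
      (1 : ℂ) - (zeta (2 * m))⁻¹ ^ k * zeta (2 * n) ^ l ≠ 0 := by
  simp only [Finset.mem_range] at hl
  simp only [Finset.mem_Icc] at hk
  have hζ0 : zeta (2 * m * n) ≠ 0 := zeta_ne_zero _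
  have hμζ : zeta (2 * m) = zeta (2 * m * n) ^ n :=
    (zeta_mul_pow (2 * m) n (by omega) (by omega)).symm
  have hωζ : zeta (2 * n) = zeta (2 * m * n) ^ m := by
    have h := zeta_mul_pow (2 * n) m (by omega) (by omega)
    rw [show 2 * n * m = 2 * m * n by ring] at h
    exact h.symm
  have hA : (zeta (2 * m))⁻¹ ^ k * zeta (2 * n) ^ l
      = zeta (2 * m * n) ^ ((m : ℤ) * l - (n : ℤ) * k) := by
    rw [show (m : ℤ) * l - (n : ℤ) * k = ((m * l : ℕ) : ℤ) - ((n * k : ℕ) : ℤ) by push_cast; ring,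
      zpow_sub₀ hζ0, zpow_natCast, zpow_natCast, hμζ, hωζ, inv_pow, ← pow_mul, ← pow_mul,
      div_eq_mul_inv]
    ring
  have hB : (zeta (2 * m))⁻¹ ^ k * (zeta (2 * n))⁻¹ ^ l
      = zeta (2 * m * n) ^ ((m : ℤ) * (-(l : ℤ)) - (n : ℤ) * k) := by
    rw [show (m : ℤ) * (-(l : ℤ)) - (n : ℤ) * k = -(((m * l + n * k : ℕ)) : ℤ) by push_cast; ring,
      zpow_neg, zpow_natCast, pow_add, hμζ, hωζ, inv_pow, inv_pow, ← pow_mul, ← pow_mul, mul_inv]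
    ring
  constructor
  · refine sub_ne_zero_of_ne (Ne.symm ?_)
    rw [hB]
    exact core hn hmn hgcd hk.1 hk.2 (l' := -(l : ℤ)) (by omega) (by omega)
  · refine sub_ne_zero_of_ne (Ne.symm ?_)
    rw [hA]
    exact core hn hmn hgcd hk.1 hk.2 (l' := (l : ℤ)) (by omega) (by omega)

/-- Let `m > n ≥ 1` be integers with `gcd(m, n) = 1`.  Then all the
denominators below are nonzero and
`∑_{l=0}^{n-1} ∑_{k=1}^{2m-1} 2(ζ_{2m}^{2nk} - 1) / ((1 - ζ_{2m}^{-k} ζ_{2n}^{-l})(1 - ζ_{2m}^{-k} ζ_{2n}^{l})) = 4n(m - n - 1)`. -/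
theorem stmt_3 (m n : ℕ) (hn : 1 ≤ n) (hmn : n < m) (hgcd : Nat.gcd m n = 1) :
    (∀ l ∈ Finset.range n, ∀ k ∈ Finset.Icc 1 (2 * m - 1),
        (1 : ℂ) - (zeta (2 * m))⁻¹ ^ k * (zeta (2 * n))⁻¹ ^ l ≠ 0 ∧
        (1 : ℂ) - (zeta (2 * m))⁻¹ ^ k * zeta (2 * n) ^ l ≠ 0) ∧
    ∑ l ∈ Finset.range n, ∑ k ∈ Finset.Icc 1 (2 * m - 1),
        2 * (zeta (2 * m) ^ (2 * n * k) - 1) /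
          ((1 - (zeta (2 * m))⁻¹ ^ k * (zeta (2 * n))⁻¹ ^ l) *
            (1 - (zeta (2 * m))⁻¹ ^ k * zeta (2 * n) ^ l))
      = ((4 * n * (m - n - 1) : ℕ) : ℂ) := by
  have hden : ∀ l ∈ Finset.range n, ∀ k ∈ Finset.Icc 1 (2 * m - 1),
      (1 : ℂ) - (zeta (2 * m))⁻¹ ^ k * (zeta (2 * n))⁻¹ ^ l ≠ 0 ∧
      (1 : ℂ) - (zeta (2 * m))⁻¹ ^ k * zeta (2 * n) ^ l ≠ 0 :=
    fun l hl k hk => denoms hn hmn hgcd hl hk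
  refine ⟨hden, ?_⟩
  have hμ : IsPrimitiveRoot (zeta (2 * m)) (2 * m) := zeta_prim (by omega)
  have hω : IsPrimitiveRoot (zeta (2 * n)) (2 * n) := zeta_prim (by omega)
  rw [range_split (N := n) hn]
  have hzero : ∑ l ∈ Icc 1 (n - 1), ∑ k ∈ Finset.Icc 1 (2 * m - 1),
      2 * (zeta (2 * m) ^ (2 * n * k) - 1) /
        ((1 - (zeta (2 * m))⁻¹ ^ k * (zeta (2 * n))⁻¹ ^ l) *
          (1 - (zeta (2 * m))⁻¹ ^ k * zeta (2 * n) ^ l)) = 0 := by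
    refine Finset.sum_eq_zero fun l hl => ?_
    simp only [Finset.mem_Icc] at hl
    exact inner_zero hn hmn hμ (zeta_ne_zero _) hω hl.1 (by omega)
      (fun k hk => hden l (Finset.mem_range.mpr (by omega)) k hk)
  rw [hzero, add_zero]
  simp only [pow_zero, mul_one]
  rw [Sigma0 hn hmn hμ (zeta_ne_zero _)]
  have hc : (m - n - 1 : ℕ) = m - (n + 1) := by omega
  rw [hc]
  push_cast [Nat.cast_sub (show n + 1 ≤ m by omega)]
  ring
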